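/- arXiv:2402.11427 — 2 statements merged into one kernel-verified Lean document; each statement's English description precedes it below -/
import Mathlib

section
/- Let X₁,…,Xₙ be independent standard normal random variables and Z = Σᵢ Xᵢ². Then for any ε ∈ (0,1), P(Z ≤ (1-ε)n) ≤ exp(-nε²/6). -/
open MeasureTheory ProbabilityTheory

lemma log_aux {ε : ℝ} (h0 : 0 < ε) (h1 : ε < 1) : Real.log (1-ε) ≤ -ε - ε^2/3 := by
  have hr : 0 < 1 - ε/4 - ε^2/12 := by nlinarith
  have h4 : (1:ℝ) - ε ≤ (1 - ε/4 - ε^2/12)^4 := by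
    nlinarith [pow_nonneg h0.le 3, pow_nonneg h0.le 4, pow_nonneg h0.le 5, pow_nonneg h0.le 6,
      mul_nonneg (pow_nonneg h0.le 2) (sub_nonneg.2 h1.le),
      mul_nonneg (pow_nonneg h0.le 3) (sub_nonneg.2 h1.le),
      mul_nonneg (pow_nonneg h0.le 4) (sub_nonneg.2 h1.le)]
  calc Real.log (1-ε) ≤ Real.log ((1 - ε/4 - ε^2/12)^4) := Real.log_le_log (by linarith) h4
    _ = 4 * Real.log (1 - ε/4 - ε^2/12) := by rw [Real.log_pow]; push_cast; ring
    _ ≤ 4 * ((1 - ε/4 - ε^2/12) - 1) := by have := Real.log_le_sub_one_of_pos hr; linarith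
    _ = -ε - ε^2/3 := by ring

lemma gauss_int {s : ℝ} (hs : 0 < s) :
    ∫ x, Real.exp (-s * x ^ 2) ∂(gaussianReal 0 1) = Real.sqrt ((1 + 2*s)⁻¹) := by
  rw [gaussianReal_of_var_ne_zero 0 one_ne_zero]
  have hpdf : gaussianPDF 0 1 = fun x => ((gaussianPDFReal 0 1 x).toNNReal : ENNReal) := rfl
  rw [hpdf, integral_withDensity_eq_integral_smul
    ((measurable_gaussianPDFReal 0 1).real_toNNReal) _]
  have heq : ∀ x : ℝ, (gaussianPDFReal 0 1 x).toNNReal • Real.exp (-s * x^2)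
      = (Real.sqrt (2*Real.pi))⁻¹ * Real.exp (-(s+1/2) * x^2) := by
    intro x
    rw [NNReal.smul_def, Real.coe_toNNReal _ (gaussianPDFReal_nonneg 0 1 x)]
    simp only [gaussianPDFReal, NNReal.coe_one, mul_one, sub_zero, one_div]
    rw [smul_eq_mul, mul_assoc, ← Real.exp_add]
    congr 2
    ring
  simp_rw [heq]
  rw [integral_const_mul, integral_gaussian]
  rw [← Real.sqrt_inv, ← Real.sqrt_mul (by positivity)]
  congr 1
  have hπ : (0:ℝ) < Real.pi := Real.pi_pos
  field_simp
  ring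

/-- Lower-tail bound for a chi-squared random variable with `n` degrees of freedom. -/
theorem chi_squared_lower_tail {Ω : Type*} [MeasurableSpace Ω] (μ : Measure Ω)
    [IsProbabilityMeasure μ] (n : ℕ) (X : Fin n → Ω → ℝ)
    (hmeas : ∀ i, Measurable (X i))
    (hgauss : ∀ i, μ.map (X i) = gaussianReal 0 1)
    (hindep : iIndepFun X μ)
    (ε : ℝ) (hε : ε ∈ Set.Ioo (0 : ℝ) 1) :
    μ {ω | ∑ i, X i ω ^ 2 ≤ (1 - ε) * n}
      ≤ ENNReal.ofReal (Real.exp (-(n : ℝ) * ε ^ 2 / 6)) := by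
  obtain ⟨hε0, hε1⟩ := hε
  have h1ε : (0:ℝ) < 1 - ε := by linarith
  set s : ℝ := ε / (2*(1-ε)) with hsdef
  have hs : 0 < s := by positivity
  have h12s : 1 + 2*s = (1-ε)⁻¹ := by rw [hsdef]; field_simp; ring
  set Y : Fin n → Ω → ℝ := fun i ω => X i ω ^ 2 with hY
  have hYmeas : ∀ i, Measurable (Y i) := fun i => (hmeas i).pow_const 2
  have hYindep : iIndepFun Y μ :=
    hindep.comp (fun _ x => x ^ 2) (fun _ => measurable_id.pow_const 2)
  have hmgf : ∀ i, mgf (Y i) μ (-s) = Real.sqrt (1 - ε) := by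
    intro i
    have hg : Measurable fun x : ℝ => Real.exp (-s * x ^ 2) :=
      ((measurable_id.pow_const 2).const_mul (-s)).exp
    calc mgf (Y i) μ (-s) = ∫ ω, Real.exp (-s * X i ω ^ 2) ∂μ := by
          simp only [mgf, hY, neg_mul]
      _ = ∫ x, Real.exp (-s * x ^ 2) ∂(μ.map (X i)) :=
          (integral_map (hmeas i).aemeasurable hg.aestronglyMeasurable).symm
      _ = Real.sqrt ((1 + 2*s)⁻¹) := by rw [hgauss i]; exact gauss_int hs
      _ = Real.sqrt (1 - ε) := by rw [h12s, inv_inv]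
  have hsummeas : Measurable (∑ i, Y i) := by
    have h : (∑ i, Y i) = fun ω => ∑ i, Y i ω := by ext ω; simp [Finset.sum_apply]
    rw [h]; exact Finset.measurable_sum _ fun i _ => hYmeas i
  have hint : Integrable (fun ω => Real.exp (-s * (∑ i, Y i) ω)) μ := by
    refine Integrable.mono' (integrable_const 1)
      ((hsummeas.const_mul (-s)).exp.aestronglyMeasurable) (ae_of_all _ fun ω => ?_)
    rw [Real.norm_eq_abs, Real.abs_exp]
    apply Real.exp_le_one_iff.2
    have hnonneg : 0 ≤ (∑ i, Y i) ω := by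
      rw [Finset.sum_apply]
      exact Finset.sum_nonneg fun i _ => sq_nonneg _
    nlinarith
  have hm := measure_le_le_exp_mul_mgf (μ := μ) (X := ∑ i, Y i) ((1-ε)*n)
    (neg_nonpos.2 hs.le) hint
  have hmgfsum : mgf (∑ i, Y i) μ (-s) = Real.sqrt (1-ε) ^ n := by
    rw [hYindep.mgf_sum hYmeas Finset.univ]
    simp [hmgf]
  rw [hmgfsum] at hm
  have hbound : Real.exp (-(-s) * ((1-ε)*n)) * Real.sqrt (1-ε) ^ n
      ≤ Real.exp (-(n : ℝ) * ε ^ 2 / 6) := by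
    have hsqrt : Real.sqrt (1-ε) = Real.exp (Real.log (1-ε) / 2) := by
      rw [← Real.exp_log (Real.sqrt_pos.2 h1ε), Real.log_sqrt h1ε.le]
    rw [hsqrt, ← Real.exp_nat_mul, ← Real.exp_add]
    apply Real.exp_le_exp.2
    have hlog : Real.log (1-ε) ≤ -ε - ε^2/3 := log_aux hε0 hε1
    have hsval : s * (1-ε) = ε / 2 := by rw [hsdef]; field_simp
    have hn : (0:ℝ) ≤ n := Nat.cast_nonneg n
    have : -(-s) * ((1-ε)*(n:ℝ)) = (ε/2) * n := by rw [← hsval]; ring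
    rw [this]
    have h2 : (n:ℝ) * (Real.log (1-ε) / 2) ≤ (n:ℝ) * ((-ε - ε^2/3) / 2) := by
      apply mul_le_mul_of_nonneg_left _ hn
      linarith
    nlinarith
  have hset : {ω | ∑ i, X i ω ^ 2 ≤ (1 - ε) * n} = {ω | (∑ i, Y i) ω ≤ (1-ε)*n} := by
    ext ω; simp [hY, Finset.sum_apply]
  rw [hset, ← ENNReal.ofReal_toReal (measure_ne_top μ _)]
  exact ENNReal.ofReal_le_ofReal (hm.trans hbound)
end

section
/- Let Φ_{n-1} be a symmetric positive definite matrix and φ_n a vector with ‖Φ_{n-1}^{-1/2} φ_n‖² ≤ κσ². Then for any vector φ, σ² φ^T (Φ_{n-1} + φ_n φ_n^T)^{-1} φ ≥ (σ²/(1 + κσ²)) φ^T Φ_{n-1}^{-1} φ. In particular, the posterior variance after one more observation is at least a 1/(1+κσ²) fraction of the previous posterior variance. -/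
open Matrix

private lemma vecMulVec_mulVec' {n : ℕ} (a b x : Fin n → ℝ) :
    (vecMulVec a b) *ᵥ x = (b ⬝ᵥ x) • a := by
  ext i
  simp only [vecMulVec_apply, mulVec, dotProduct, Pi.smul_apply, smul_eq_mul, Finset.sum_mul]
  exact Finset.sum_congr rfl fun k _ => by ring

private lemma mul_vecMulVec' {n : ℕ} (M : Matrix (Fin n) (Fin n) ℝ) (a b : Fin n → ℝ) :
    M * vecMulVec a b = vecMulVec (M *ᵥ a) b := by
  ext i j
  simp only [mul_apply, vecMulVec_apply, mulVec, dotProduct, Finset.sum_mul]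
  exact Finset.sum_congr rfl fun k _ => by ring

private lemma vecMulVec_mul' {n : ℕ} (M : Matrix (Fin n) (Fin n) ℝ) (a b : Fin n → ℝ) :
    vecMulVec a b * M = vecMulVec a (Mᵀ *ᵥ b) := by
  ext i j
  simp only [mul_apply, vecMulVec_apply, mulVec, dotProduct, transpose_apply, Finset.mul_sum]
  exact Finset.sum_congr rfl fun k _ => by ring

/-- Cauchy–Schwarz for a positive semidefinite real matrix. -/
private lemma cs_psd {n : ℕ} (M : Matrix (Fin n) (Fin n) ℝ) (hM : M.PosSemidef)
    (hMT : Mᵀ = M) (x y : Fin n → ℝ) :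
    (x ⬝ᵥ M *ᵥ y) ^ 2 ≤ (x ⬝ᵥ M *ᵥ x) * (y ⬝ᵥ M *ᵥ y) := by
  have hyx : y ⬝ᵥ M *ᵥ x = x ⬝ᵥ M *ᵥ y := by
    nth_rewrite 1 [← hMT]
    rw [dotProduct_mulVec, vecMul_transpose, dotProduct_comm]
  have key : ∀ t : ℝ, 0 ≤ (y ⬝ᵥ M *ᵥ y) * (t * t) + (2 * (x ⬝ᵥ M *ᵥ y)) * t
      + (x ⬝ᵥ M *ᵥ x) := by
    intro t
    have h := hM.dotProduct_mulVec_nonneg (x + t • y)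
    simp only [RCLike.star_def, star_trivial, RCLike.re_to_real] at h
    calc (0:ℝ) ≤ (x + t • y) ⬝ᵥ M *ᵥ (x + t • y) := h
      _ = (y ⬝ᵥ M *ᵥ y) * (t * t) + (2 * (x ⬝ᵥ M *ᵥ y)) * t + (x ⬝ᵥ M *ᵥ x) := by
          simp only [mulVec_add, dotProduct_add, add_dotProduct, smul_dotProduct,
            dotProduct_smul, mulVec_smul, hyx, smul_eq_mul]
          ring
  have hd := discrim_le_zero key
  rw [discrim] at hd
  nlinarith [hd]

theorem variance_shrinkage_lower_bound {n : ℕ} (Φ : Matrix (Fin n) (Fin n) ℝ)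
    (hΦ : Φ.PosDef) (φn φ : Fin n → ℝ) (κ σ : ℝ) (hκ : 0 < κ) (hσ : 0 < σ ^ 2)
    (hφn : φn ⬝ᵥ Φ⁻¹.mulVec φn ≤ κ * σ ^ 2) :
    σ ^ 2 * (φ ⬝ᵥ (Φ + vecMulVec φn φn)⁻¹.mulVec φ)
      ≥ σ ^ 2 / (1 + κ * σ ^ 2) * (φ ⬝ᵥ Φ⁻¹.mulVec φ) := by
  set M := Φ⁻¹ with hMdef
  have hM : M.PosDef := hΦ.inv
  have hMT : Mᵀ = M := by
    exact (conjTranspose_eq_transpose_of_trivial M).symm.trans hM.isHermitian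
  set c : ℝ := φn ⬝ᵥ M *ᵥ φn with hc
  set u : Fin n → ℝ := M *ᵥ φn with hu
  have hc0 : 0 ≤ c := by
    have := hM.posSemidef.dotProduct_mulVec_nonneg φn
    simpa using this
  have hc1 : (0:ℝ) < 1 + c := by linarith
  -- Sherman–Morrison
  have hΦM : Φ * M = 1 := Φ.mul_nonsing_inv hΦ.det_pos.ne'.isUnit
  have hΦu : Φ *ᵥ u = φn := by
    rw [hu, mulVec_mulVec, hΦM, one_mulVec]
  have hcu : φn ⬝ᵥ u = c := by rw [hc, hu]
  have sm : (Φ + vecMulVec φn φn)⁻¹ = M - (1 + c)⁻¹ • vecMulVec u u := by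
    apply Matrix.inv_eq_right_inv
    have e1 : Φ * ((1 + c)⁻¹ • vecMulVec u u) = (1 + c)⁻¹ • vecMulVec φn u := by
      rw [Matrix.mul_smul, mul_vecMulVec', hΦu]
    have e2 : vecMulVec φn φn * M = vecMulVec φn u := by
      rw [vecMulVec_mul', hMT, ← hu]
    have h1' : vecMulVec φn φn * vecMulVec u u = c • vecMulVec φn u := by
      rw [mul_vecMulVec', vecMulVec_mulVec', hcu]
      ext i j
      simp only [vecMulVec_apply, Matrix.smul_apply, Pi.smul_apply, smul_eq_mul]
      ring
    have e3 : vecMulVec φn φn * ((1 + c)⁻¹ • vecMulVec u u)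
        = ((1 + c)⁻¹ * c) • vecMulVec φn u := by
      rw [Matrix.mul_smul, h1', smul_smul]
    rw [Matrix.mul_sub, Matrix.add_mul, Matrix.add_mul, hΦM, e1, e2, e3]
    have hone : (1 + c)⁻¹ + (1 + c)⁻¹ * c = 1 := by field_simp
    have hs : (1 + c)⁻¹ • vecMulVec φn u + ((1 + c)⁻¹ * c) • vecMulVec φn u
        = vecMulVec φn u := by rw [← add_smul, hone, one_smul]
    rw [hs, add_sub_cancel_right]
  rw [sm]
  set a : ℝ := φ ⬝ᵥ M *ᵥ φ with ha
  set b : ℝ := φ ⬝ᵥ u with hb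
  have hquad : φ ⬝ᵥ (M - (1 + c)⁻¹ • vecMulVec u u) *ᵥ φ = a - (1 + c)⁻¹ * b ^ 2 := by
    rw [sub_mulVec, dotProduct_sub, smul_mulVec, dotProduct_smul,
      vecMulVec_mulVec']
    have h4 : φ ⬝ᵥ (u ⬝ᵥ φ) • u = (u ⬝ᵥ φ) * b := by
      simp [dotProduct_smul, hb, smul_eq_mul, mul_comm]
    rw [h4, dotProduct_comm u φ, ← hb, smul_eq_mul, ← ha]
    ring
  rw [hquad]
  have ha0 : 0 ≤ a := by
    have := hM.posSemidef.dotProduct_mulVec_nonneg φ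
    simpa using this
  have hcs : b ^ 2 ≤ a * c := by
    have := cs_psd M hM.posSemidef hMT φ φn
    rw [← hu] at this
    simpa [hb, ha, hc] using this
  have hk1 : (0:ℝ) < 1 + κ * σ ^ 2 := by positivity
  have expand : (a - (1 + c)⁻¹ * b ^ 2) * (1 + c) = a * (1 + c) - b ^ 2 := by
    field_simp
  have hD : a ≤ (a - (1 + c)⁻¹ * b ^ 2) * (1 + c) := by
    rw [expand]; nlinarith [hcs]
  have hD0 : 0 ≤ a - (1 + c)⁻¹ * b ^ 2 := by nlinarith [hD, ha0, hc1]
  rw [ge_iff_le, div_mul_eq_mul_div, div_le_iff₀ hk1]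
  nlinarith [mul_le_mul_of_nonneg_left hD hσ.le,
    mul_nonneg (mul_nonneg hσ.le hD0) (sub_nonneg.2 hφn)]
end
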